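/- An argument ⟨Γ, Δ⟩ is {1}-preservation valid (every probabilistic model giving every γ ∈ Γ probability 1 gives some δ ∈ Δ probability 1) if and only if it is supervaluationistically valid (for every probabilistic model, if every γ ∈ Γ is true at all worlds then some δ ∈ Δ is true at all worlds). -/

import Mathlib

/-- Propositional formulas: atoms, negation, disjunction. -/
inductive Fml : Type
  | atom : ℕ → Fml
  | neg : Fml → Fml
  | or : Fml → Fml → Fml
deriving DecidableEq

namespace Fml

def and (φ ψ : Fml) : Fml := neg (or (neg φ) (neg ψ))

def bot : Fml := and (atom 0) (neg (atom 0))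

def imp (φ ψ : Fml) : Fml := or (neg φ) ψ

def eval (v : ℕ → Bool) : Fml → Bool
  | atom n => v n
  | neg φ => !(eval v φ)
  | or φ ψ => (eval v φ) || (eval v ψ)

end Fml

/-- Two formulas are jointly classically unsatisfiable. -/
def Incompatible (φ ψ : Fml) : Prop :=
  ∀ v : ℕ → Bool, ¬(φ.eval v = true ∧ ψ.eval v = true)

/-- Classical (Set-Set) validity. -/
def ClValid (Γ Δ : Finset Fml) : Prop :=
  ∀ v : ℕ → Bool, (∀ γ ∈ Γ, γ.eval v = true) → ∃ δ ∈ Δ, δ.eval v = true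

/-- Classical single-conclusion entailment. -/
def ClEntails (Γ : Finset Fml) (φ : Fml) : Prop :=
  ∀ v : ℕ → Bool, (∀ γ ∈ Γ, γ.eval v = true) → φ.eval v = true

def ClConsistent (Γ : Finset Fml) : Prop :=
  ∃ v : ℕ → Bool, ∀ γ ∈ Γ, γ.eval v = true

def Tautology (φ : Fml) : Prop := ∀ v : ℕ → Bool, φ.eval v = true

/-- A probability distribution on formulas. -/
structure ProbDist where
  p : Fml → ℝ
  nonneg : ∀ φ, 0 ≤ p φ
  le_one : ∀ φ, p φ ≤ 1
  bot_eq : p Fml.bot = 0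
  neg_eq : ∀ φ, p (Fml.neg φ) = 1 - p φ
  add_eq : ∀ φ ψ, Incompatible φ ψ → p (Fml.or φ ψ) = p φ + p ψ

/-- A probabilistic model: worlds with classical valuations and a finitely
additive probability measure on subsets of worlds. -/
structure PModel where
  W : Type
  nonempty : Nonempty W
  val : W → ℕ → Bool
  μ : Set W → ℝ
  nonneg : ∀ A : Set W, 0 ≤ μ A
  empty_eq : μ (∅ : Set W) = 0
  univ_eq : μ (Set.univ : Set W) = 1
  add_eq : ∀ A B : Set W, Disjoint A B → μ (A ∪ B) = μ A + μ B

/-- Denotation of a formula in a model. -/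
def PModel.den (M : PModel) (φ : Fml) : Set M.W := {w | φ.eval (M.val w) = true}

/-- Induced probability of a formula in a model. -/
def PModel.prob (M : PModel) (φ : Fml) : ℝ := M.μ (M.den φ)

/-- An upset of [0,1]: contains 1, excludes 0, upward closed within [0,1]. -/
def IsUpset (α : Set ℝ) : Prop :=
  α ⊆ Set.Icc 0 1 ∧ (1 : ℝ) ∈ α ∧ (0 : ℝ) ∉ α ∧
    ∀ x ∈ α, ∀ y ∈ Set.Icc (0:ℝ) 1, x ≤ y → y ∈ α

/-- The mirror image of α. -/
def mirror (α : Set ℝ) : Set ℝ := {x ∈ Set.Icc (0:ℝ) 1 | 1 - x ∈ α}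

/-- The dual of α. -/
def dual (α : Set ℝ) : Set ℝ := Set.Icc (0:ℝ) 1 \ mirror α

/-- Conjunction of a finite set of formulas. -/
noncomputable def conj (Γ : Finset Fml) : Fml := Γ.toList.foldr Fml.and (Fml.neg Fml.bot)

/-- Disjunction of a finite set of formulas. -/
noncomputable def disj (Δ : Finset Fml) : Fml := Δ.toList.foldr Fml.or Fml.bot

/-- Disjunction of a list of formulas. -/
def disjList (l : List Fml) : Fml := l.foldr Fml.or Fml.bot

/-- α-preservation validity (over probability distributions). -/
def PresValid (α : Set ℝ) (Γ Δ : Finset Fml) : Prop :=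
  ∀ P : ProbDist, (∀ γ ∈ Γ, P.p γ ∈ α) → ∃ δ ∈ Δ, P.p δ ∈ α

/-- α-preservation validity (over probabilistic models). -/
def PresValidM (α : Set ℝ) (Γ Δ : Finset Fml) : Prop :=
  ∀ M : PModel, (∀ γ ∈ Γ, M.prob γ ∈ α) → ∃ δ ∈ Δ, M.prob δ ∈ α

/-- α-symmetric validity. -/
def SymValid (α : Set ℝ) (Γ Δ : Finset Fml) : Prop :=
  ∀ P : ProbDist, (∀ γ ∈ Γ, P.p γ ∈ α) → ∃ δ ∈ Δ, P.p δ ∉ mirror α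

/-- α-satisfiability of a finite set of formulas. -/
def Satis (α : Set ℝ) (Γ : Finset Fml) : Prop :=
  ∃ P : ProbDist, ∀ γ ∈ Γ, P.p γ ∈ α


lemma PModel.mono (M : PModel) {A B : Set M.W} (h : A ⊆ B) : M.μ A ≤ M.μ B := by
  have : M.μ B = M.μ A + M.μ (B \ A) := by
    rw [← M.add_eq A (B \ A) Set.disjoint_sdiff_right, Set.union_diff_cancel h]
  linarith [M.nonneg (B \ A)]

lemma PModel.le_one (M : PModel) (A : Set M.W) : M.μ A ≤ 1 := by
  have := M.mono (Set.subset_univ A)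
  rwa [M.univ_eq] at this

lemma PModel.subadd (M : PModel) (A B : Set M.W) : M.μ (A ∪ B) ≤ M.μ A + M.μ B := by
  have h1 : M.μ (A ∪ B) = M.μ A + M.μ (B \ A) := by
    rw [← M.add_eq A (B \ A) Set.disjoint_sdiff_right, Set.union_diff_self]
  have h2 : M.μ (B \ A) ≤ M.μ B := M.mono Set.diff_subset
  linarith

lemma PModel.biUnion_null (M : PModel) (s : Finset Fml) (g : Fml → Set M.W) :
    (∀ γ ∈ s, M.μ (g γ) = 0) → M.μ (⋃ γ ∈ s, g γ) ≤ 0 := by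
  classical
  induction s using Finset.induction with
  | empty => intro _; simp [M.empty_eq]
  | @insert a t ha ih =>
    intro h
    rw [Finset.set_biUnion_insert]
    have h1 := subadd M (g a) (⋃ γ ∈ t, g γ)
    have h2 := h a (Finset.mem_insert_self a t)
    have h3 := ih (fun γ hγ => h γ (Finset.mem_insert_of_mem hγ))
    linarith


/-- {1}-preservation validity coincides with supervaluationist validity. -/
theorem stmt2 (Γ Δ : Finset Fml) :
    (∀ M : PModel, (∀ γ ∈ Γ, M.prob γ = 1) → ∃ δ ∈ Δ, M.prob δ = 1) ↔
    (∀ M : PModel, (∀ γ ∈ Γ, M.den γ = Set.univ) → ∃ δ ∈ Δ, M.den δ = Set.univ) := by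
  constructor
  · -- preservation ⇒ supervaluationist
    intro h M hΓ
    by_contra hc
    push_neg at hc
    have hfail : ∀ δ ∈ Δ, ∃ w : M.W, ¬ δ.eval (M.val w) = true := by
      intro δ hδ
      by_contra hc2; push_neg at hc2
      exact hc δ hδ (Set.eq_univ_of_forall hc2)
    have hprobΓ : ∀ (M' : PModel), (∀ γ ∈ Γ, M'.den γ = Set.univ) →
        ∀ γ ∈ Γ, M'.prob γ = 1 := by
      intro M' hd γ hγ
      have := hd γ hγ
      unfold PModel.prob
      rw [this, M'.univ_eq]
    rcases Δ.eq_empty_or_nonempty with hΔ | hΔ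
    · obtain ⟨δ, hδ, -⟩ := h M (hprobΓ M hΓ)
      simp [hΔ] at hδ
    · classical
      let f : {δ // δ ∈ Δ} → M.W := fun δ => (hfail δ.1 δ.2).choose
      have hf : ∀ δ : {δ // δ ∈ Δ}, ¬ (δ.1).eval (M.val (f δ)) = true :=
        fun δ => (hfail δ.1 δ.2).choose_spec
      have hN : (0:ℝ) < (Δ.card : ℝ) := by
        exact_mod_cast Finset.card_pos.mpr hΔ
      let M' : PModel := {
        W := M.W
        nonempty := M.nonempty
        val := M.val
        μ := fun A => ((Δ.attach.filter (fun δ => f δ ∈ A)).card : ℝ) / (Δ.card : ℝ)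
        nonneg := fun A => div_nonneg (Nat.cast_nonneg _) (Nat.cast_nonneg _)
        empty_eq := by simp
        univ_eq := by
          simp only [Set.mem_univ, Finset.filter_true, Finset.card_attach]
          exact div_self hN.ne'
        add_eq := by
          intro A B hAB
          simp only [Set.mem_union, Finset.filter_or]
          rw [Finset.card_union_of_disjoint, Nat.cast_add, add_div]
          refine Finset.disjoint_left.mpr ?_
          intro x hx1 hx2
          rw [Finset.mem_filter] at hx1 hx2
          exact Set.disjoint_left.mp hAB hx1.2 hx2.2
      }
      have hΓ' : ∀ γ ∈ Γ, M'.prob γ = 1 := hprobΓ M' hΓ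
      obtain ⟨δ, hδ, hp⟩ := h M' hΓ'
      have hlt : (Δ.attach.filter (fun d => f d ∈ M'.den δ)).card < Δ.card := by
        rw [← Finset.card_attach (s := Δ)]
        refine Finset.card_lt_card ?_
        constructor
        · exact Finset.filter_subset _ _
        · intro hsub
          have := hsub (Finset.mem_attach Δ ⟨δ, hδ⟩)
          rw [Finset.mem_filter] at this
          exact hf ⟨δ, hδ⟩ this.2
      have : M'.prob δ < 1 := by
        show ((Δ.attach.filter (fun d => f d ∈ M'.den δ)).card : ℝ) / (Δ.card : ℝ) < 1
        rw [div_lt_one hN]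
        exact_mod_cast hlt
      linarith [this, hp.ge, hp.le]
  · -- supervaluationist ⇒ preservation
    intro h M hΓ
    classical
    set S : Set M.W := {w | ∀ γ ∈ Γ, γ.eval (M.val w) = true} with hS
    have hScompl : Sᶜ ⊆ ⋃ γ ∈ Γ, (M.den γ)ᶜ := by
      intro w hw
      simp only [Set.mem_compl_iff, hS, Set.mem_setOf_eq, not_forall] at hw
      obtain ⟨γ, hγ, hne⟩ := hw
      exact Set.mem_biUnion hγ hne
    have hnull : ∀ γ ∈ Γ, M.μ (M.den γ)ᶜ = 0 := by
      intro γ hγ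
      have h1 : M.μ (M.den γ ∪ (M.den γ)ᶜ) = M.μ (M.den γ) + M.μ (M.den γ)ᶜ :=
        M.add_eq _ _ disjoint_compl_right
      rw [Set.union_compl_self, M.univ_eq] at h1
      have h2 : M.μ (M.den γ) = 1 := hΓ γ hγ
      linarith
    have hUnion : M.μ (⋃ γ ∈ Γ, (M.den γ)ᶜ) ≤ 0 :=
      M.biUnion_null Γ (fun γ => (M.den γ)ᶜ) hnull
    have hSc0 : M.μ Sᶜ = 0 := le_antisymm (le_trans (M.mono hScompl) hUnion) (M.nonneg _)
    have hS1 : M.μ S = 1 := by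
      have h1 : M.μ (S ∪ Sᶜ) = M.μ S + M.μ Sᶜ := M.add_eq _ _ disjoint_compl_right
      rw [Set.union_compl_self, M.univ_eq] at h1
      linarith
    have hSne : S.Nonempty := by
      rcases S.eq_empty_or_nonempty with he | hne
      · rw [he, M.empty_eq] at hS1; norm_num at hS1
      · exact hne
    let M' : PModel := {
      W := S
      nonempty := hSne.to_subtype
      val := fun w => M.val w.1
      μ := fun A => M.μ (Subtype.val '' A)
      nonneg := fun A => M.nonneg _
      empty_eq := by simp [M.empty_eq]
      univ_eq := by rw [Set.image_univ, Subtype.range_coe]; exact hS1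
      add_eq := by
        intro A B hAB
        rw [Set.image_union]
        exact M.add_eq _ _ (Set.disjoint_image_of_injective Subtype.val_injective hAB)
    }
    have hΓ' : ∀ γ ∈ Γ, M'.den γ = Set.univ := by
      intro γ hγ
      refine Set.eq_univ_of_forall fun w => ?_
      exact w.2 γ hγ
    obtain ⟨δ, hδ, hd⟩ := h M' hΓ'
    refine ⟨δ, hδ, ?_⟩
    have hsub : S ⊆ M.den δ := by
      intro w hw
      have : (⟨w, hw⟩ : S) ∈ M'.den δ := by rw [hd]; trivial
      exact this
    have := M.mono hsub
    have := M.le_one (M.den δ)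
    unfold PModel.prob
    linarith
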